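/- Let g(t) = t³ - (3/2)t² + (1/2)t, fix α* ∈ (0,1), and let t₂(α*) = (3 - α* - √((3-α*)(1+α*)/3))/4. Then D^α_{*0} g(t) ≥ 0 for all t ∈ [0, t₂(α*)] and all α ∈ (0, α*], yet g is not monotone on the interval [0, t₂(α*)]. -/

import Mathlib

/-- The Caputo fractional derivative of order `α` with starting point `0`:
`D^α_{*0} g(t) = (1/Γ(1-α)) ∫_0^t (t-s)^(-α) g'(s) ds`. -/
noncomputable def caputoDeriv0 (α : ℝ) (g : ℝ → ℝ) (t : ℝ) : ℝ :=
  (Real.Gamma (1 - α))⁻¹ * ∫ s in (0:ℝ)..t, (t - s) ^ (-α) * deriv g s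

/-- The smaller positive zero of the quadratic factor appearing in `D^α_{*0} g`. -/
noncomputable def t2 (α : ℝ) : ℝ :=
  (3 - α - Real.sqrt ((3 - α) * (1 + α) / 3)) / 4

lemma rint (t β : ℝ) (hβ : -1 < β) :
    ∫ s in (0:ℝ)..t, (t - s) ^ β = t ^ (β + 1) / (β + 1) := by
  have h := intervalIntegral.integral_comp_sub_left (fun x : ℝ => x ^ β) t (a := (0:ℝ)) (b := t)
  simp only [sub_self, sub_zero] at h
  rw [h, integral_rpow (Or.inl hβ), Real.zero_rpow (by linarith), sub_zero]

lemma rintble (t β : ℝ) (hβ : -1 < β) :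
    IntervalIntegrable (fun s : ℝ => (t - s) ^ β) MeasureTheory.volume 0 t := by
  have h := (intervalIntegral.intervalIntegrable_rpow' hβ (a := t) (b := (0:ℝ))).comp_sub_left t
  simpa using h

lemma aux_int (t α : ℝ) (ht : 0 ≤ t) (hα : 0 < α) (hα1 : α < 1) :
    ∫ s in (0:ℝ)..t, (t - s) ^ (-α) * (3 * s ^ 2 - 3 * s + 1 / 2)
      = (3 * t ^ 2 - 3 * t + 1 / 2) * (t ^ (1 - α) / (1 - α))
        + (3 - 6 * t) * (t ^ (2 - α) / (2 - α)) + 3 * (t ^ (3 - α) / (3 - α)) := by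
  have h0 : (-1 : ℝ) < -α := by linarith
  have h1 : (-1 : ℝ) < 1 - α := by linarith
  have h2 : (-1 : ℝ) < 2 - α := by linarith
  have i1 := (rintble t (-α) h0).const_mul (3 * t ^ 2 - 3 * t + 1 / 2)
  have i2 := (rintble t (1 - α) h1).const_mul (3 - 6 * t)
  have i3 := (rintble t (2 - α) h2).const_mul (3:ℝ)
  have hcongr : Set.EqOn
      (fun s => (t - s) ^ (-α) * (3 * s ^ 2 - 3 * s + 1 / 2))
      (fun s => (3 * t ^ 2 - 3 * t + 1 / 2) * (t - s) ^ (-α)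
        + (3 - 6 * t) * (t - s) ^ (1 - α) + 3 * (t - s) ^ (2 - α))
      (Set.uIcc 0 t) := by
    intro s hs
    rw [Set.uIcc_of_le ht] at hs
    rcases eq_or_lt_of_le hs.2 with h | h
    · simp only [h, sub_self]
      rw [Real.zero_rpow (by linarith : -α ≠ 0), Real.zero_rpow (by linarith : 1 - α ≠ 0),
        Real.zero_rpow (by linarith : 2 - α ≠ 0)]
      ring
    · have hu : (0:ℝ) < t - s := by linarith
      have e1 : (t - s) ^ (1 - α) = (t - s) * (t - s) ^ (-α) := by
        rw [show (1 - α) = 1 + (-α) by ring, Real.rpow_add hu, Real.rpow_one]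
      have e2 : (t - s) ^ (2 - α) = (t - s) ^ 2 * (t - s) ^ (-α) := by
        rw [show (2 - α) = 2 + (-α) by ring, Real.rpow_add hu, Real.rpow_two]
      simp only [e1, e2]
      ring
  rw [intervalIntegral.integral_congr hcongr,
    intervalIntegral.integral_add (i1.add i2) i3,
    intervalIntegral.integral_add i1 i2,
    intervalIntegral.integral_const_mul, intervalIntegral.integral_const_mul,
    intervalIntegral.integral_const_mul,
    rint t (-α) h0, rint t (1 - α) h1, rint t (2 - α) h2,
    show -α + 1 = 1 - α by ring, show 1 - α + 1 = 2 - α by ring,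
    show 2 - α + 1 = 3 - α by ring]

lemma t2_le_half {α : ℝ} (h0 : 0 < α) (h1 : α < 1) : t2 α ≤ 1 / 2 := by
  have hs : (1 - α) ≤ Real.sqrt ((3 - α) * (1 + α) / 3) := by
    rw [Real.le_sqrt (by linarith) (by nlinarith)]
    nlinarith
  unfold t2; linarith

lemma t2_nonneg {α : ℝ} (h0 : 0 < α) (h1 : α < 1) : 0 ≤ t2 α := by
  have hs : Real.sqrt ((3 - α) * (1 + α) / 3) < 3 - α := by
    rw [Real.sqrt_lt' (by linarith)]
    nlinarith
  unfold t2; linarith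

lemma crit_lt_t2 {α : ℝ} (h0 : 0 < α) (h1 : α < 1) :
    (3 - Real.sqrt 3) / 6 < t2 α := by
  set r := Real.sqrt 3 with hr
  have hr2 : r ^ 2 = 3 := Real.sq_sqrt (by norm_num)
  have hrpos : 0 < r := Real.sqrt_pos.mpr (by norm_num)
  have hs : Real.sqrt ((3 - α) * (1 + α) / 3) < 1 - α + 2 * r / 3 := by
    rw [Real.sqrt_lt' (by nlinarith)]
    nlinarith [sq_nonneg (1 - α)]
  unfold t2
  nlinarith

lemma Q_nonneg {α αstar t : ℝ} (h0 : 0 < α) (hle : α ≤ αstar) (h1 : αstar < 1)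
    (ht0 : 0 ≤ t) (ht : t ≤ t2 αstar) :
    0 ≤ 6 * t ^ 2 - 3 * (3 - α) * t + (2 - α) * (3 - α) / 2 := by
  set s := Real.sqrt ((3 - αstar) * (1 + αstar) / 3) with hs
  have hsnn : 0 ≤ s := Real.sqrt_nonneg _
  have hs2 : s ^ 2 = (3 - αstar) * (1 + αstar) / 3 := Real.sq_sqrt (by nlinarith)
  have hhalf : t ≤ 1 / 2 := ht.trans (t2_le_half (by linarith) h1)
  have h1' : t ≤ (3 - αstar - s) / 4 := by unfold t2 at ht; linarith
  have h2' : t ≤ (3 - αstar + s) / 4 := by linarith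
  have hm : 0 ≤ (αstar - α) * ((5 - α - αstar) / 2 - 3 * t) := by
    apply mul_nonneg (by linarith); linarith
  nlinarith [mul_nonneg (by linarith : 0 ≤ (3 - αstar - s) / 4 - t)
    (by linarith : 0 ≤ (3 - αstar + s) / 4 - t)]

theorem caputo_nonneg_but_not_monotone (g : ℝ → ℝ)
    (hg : ∀ t, g t = t ^ 3 - (3 / 2) * t ^ 2 + (1 / 2) * t)
    (αstar : ℝ) (hαstar : αstar ∈ Set.Ioo (0 : ℝ) 1) :
    (∀ t ∈ Set.Icc 0 (t2 αstar), ∀ α ∈ Set.Ioc 0 αstar,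
      0 ≤ caputoDeriv0 α g t) ∧
    ¬ (MonotoneOn g (Set.Icc 0 (t2 αstar)) ∨
       AntitoneOn g (Set.Icc 0 (t2 αstar))) := by
  obtain ⟨hα0, hα1⟩ := hαstar
  have hgf : g = fun t => t ^ 3 - (3 / 2) * t ^ 2 + (1 / 2) * t := funext hg
  have hderiv : ∀ s, deriv g s = 3 * s ^ 2 - 3 * s + 1 / 2 := by
    intro s
    have h : HasDerivAt g (3 * s ^ 2 - 3 * s + 1 / 2) s := by
      rw [hgf]
      have h1 := hasDerivAt_pow 3 s
      have h2 := (hasDerivAt_pow 2 s).const_mul ((3:ℝ) / 2)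
      have h3 := (hasDerivAt_id s).const_mul ((1:ℝ) / 2)
      convert (h1.sub h2).add h3 using 1
      · rfl
      · rfl
      · funext t; simp only [Pi.add_apply, Pi.sub_apply, id]
      · norm_num; ring
    exact h.deriv
  constructor
  · rintro t ⟨ht0, ht2⟩ α ⟨hα0', hαle⟩
    have hα1' : α < 1 := lt_of_le_of_lt hαle hα1
    have hΓ : 0 < Real.Gamma (1 - α) := Real.Gamma_pos_of_pos (by linarith)
    unfold caputoDeriv0
    simp only [hderiv]
    rcases eq_or_lt_of_le ht0 with h | htpos
    · rw [← h, intervalIntegral.integral_same, mul_zero]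
    rw [aux_int t α ht0 hα0' hα1']
    apply mul_nonneg (inv_nonneg.mpr hΓ.le)
    have e2 : t ^ (2 - α) = t * t ^ (1 - α) := by
      rw [show (2 - α) = 1 + (1 - α) by ring, Real.rpow_add htpos, Real.rpow_one]
    have e3 : t ^ (3 - α) = t ^ 2 * t ^ (1 - α) := by
      rw [show (3 - α) = 2 + (1 - α) by ring, Real.rpow_add htpos, Real.rpow_two]
    have hQ := Q_nonneg hα0' hαle hα1 ht0 ht2
    have hd1 : (0:ℝ) < 1 - α := by linarith
    have hd2 : (0:ℝ) < 2 - α := by linarith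
    have hd3 : (0:ℝ) < 3 - α := by linarith
    have hP : 0 ≤ (3 * t ^ 2 - 3 * t + 1 / 2) / (1 - α) + (3 - 6 * t) * t / (2 - α)
        + 3 * t ^ 2 / (3 - α) := by
      have hPD : ((3 * t ^ 2 - 3 * t + 1 / 2) / (1 - α) + (3 - 6 * t) * t / (2 - α)
          + 3 * t ^ 2 / (3 - α))
          = (6 * t ^ 2 - 3 * (3 - α) * t + (2 - α) * (3 - α) / 2)
            / ((1 - α) * ((2 - α) * (3 - α))) := by
        field_simp
        ring
      rw [hPD]
      positivity
    calc (0:ℝ) ≤ t ^ (1 - α) * ((3 * t ^ 2 - 3 * t + 1 / 2) / (1 - α)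
          + (3 - 6 * t) * t / (2 - α) + 3 * t ^ 2 / (3 - α)) :=
        mul_nonneg (Real.rpow_nonneg ht0 _) hP
      _ = (3 * t ^ 2 - 3 * t + 1 / 2) * (t ^ (1 - α) / (1 - α))
          + (3 - 6 * t) * (t ^ (2 - α) / (2 - α)) + 3 * (t ^ (3 - α) / (3 - α)) := by
        rw [e2, e3]; ring
  · have hc : (0:ℝ) < (3 - Real.sqrt 3) / 6 := by
      have : Real.sqrt 3 < 3 := by
        rw [Real.sqrt_lt' (by norm_num)]; norm_num
      linarith
    set c := (3 - Real.sqrt 3) / 6 with hcdef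
    have hct2 : c < t2 αstar := crit_lt_t2 hα0 hα1
    have hhalf : t2 αstar ≤ 1 / 2 := t2_le_half hα0 hα1
    have hr2 : Real.sqrt 3 ^ 2 = 3 := Real.sq_sqrt (by norm_num)
    have hrpos : 0 < Real.sqrt 3 := Real.sqrt_pos.mpr (by norm_num)
    have hcont : Continuous g := by rw [hgf]; fun_prop
    have hmono : StrictMonoOn g (Set.Icc 0 c) := by
      apply strictMonoOn_of_deriv_pos (convex_Icc _ _) hcont.continuousOn
      intro x hx
      rw [interior_Icc] at hx
      rw [hderiv]
      nlinarith [mul_pos (by rw [hcdef] at hx; nlinarith [hx.2] : (0:ℝ) < (3 - Real.sqrt 3) / 6 - x)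
        (by nlinarith [hx.1, hx.2] : (0:ℝ) < (3 + Real.sqrt 3) / 6 - x), hr2]
    have hanti : StrictAntiOn g (Set.Icc c (t2 αstar)) := by
      apply strictAntiOn_of_deriv_neg (convex_Icc _ _) hcont.continuousOn
      intro x hx
      rw [interior_Icc] at hx
      rw [hderiv]
      nlinarith [mul_pos (by rw [hcdef] at hx; nlinarith [hx.1] : (0:ℝ) < x - (3 - Real.sqrt 3) / 6)
        (by nlinarith [hx.2] : (0:ℝ) < (3 + Real.sqrt 3) / 6 - x), hr2]
    rintro (hM | hA)
    · have h1 : g c > g (t2 αstar) :=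
        hanti ⟨le_refl c, hct2.le⟩ ⟨hct2.le, le_refl _⟩ hct2
      have h2 : g c ≤ g (t2 αstar) :=
        hM ⟨hc.le, hct2.le⟩ ⟨t2_nonneg hα0 hα1, le_refl _⟩ hct2.le
      linarith
    · have h1 : g 0 < g c := hmono ⟨le_refl _, hc.le⟩ ⟨hc.le, le_refl _⟩ hc
      have h2 : g c ≤ g 0 := hA ⟨le_refl _, t2_nonneg hα0 hα1⟩ ⟨hc.le, hct2.le⟩ hc.le
      linarith
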